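/- arXiv:1501.06152 — 3 statements merged into one kernel-verified Lean document; each statement's English description precedes it below -/
import Mathlib

section
/- Let G be a set and F a subgroup of the group of bijections of G, and write A ≤ B if A is F-equidecomposable with a subset of B. If A ≤ B and B ≤ A, then A and B are F-equidecomposable (a Schröder–Bernstein theorem for F-equidecomposability). -/
open Set Function

/-- `A` and `B` are `F`-equidecomposable: there are finite partitions of `A` and `B`
into pairwise disjoint pieces and elements of `F` carrying the pieces of `A`
onto the pieces of `B`. -/
def Equidec {G : Type*} (F : Subgroup (Equiv.Perm G)) (A B : Set G) : Prop :=
  ∃ (m : ℕ) (As Bs : Fin m → Set G) (φ : Fin m → Equiv.Perm G),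
    (∀ i, φ i ∈ F) ∧
    Pairwise (Function.onFun Disjoint As) ∧
    Pairwise (Function.onFun Disjoint Bs) ∧
    (⋃ i, As i) = A ∧ (⋃ i, Bs i) = B ∧
    ∀ i, (φ i) '' As i = Bs i

/-- `f` is piecewise given by finitely many elements of `F` on `A`. -/
def PWpc {G : Type*} (F : Subgroup (Equiv.Perm G)) (A : Set G) (f : G → G) : Prop :=
  ∃ (m : ℕ) (φ : Fin m → Equiv.Perm G), (∀ i, φ i ∈ F) ∧ ∀ a ∈ A, ∃ i, f a = φ i a

lemma equidec_of_fn {G : Type*} {F : Subgroup (Equiv.Perm G)} {A B : Set G} {f : G → G}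
    (hinj : Set.InjOn f A) (himg : f '' A = B) (hpw : PWpc F A f) : Equidec F A B := by
  classical
  obtain ⟨m, φ, hφF, hφ⟩ := hpw
  set As : Fin m → Set G := fun i => {a | a ∈ A ∧ f a = φ i a ∧ ∀ j, j < i → f a ≠ φ j a}
    with hAs
  have hdisj : Pairwise (Function.onFun Disjoint As) := by
    intro i j hij
    simp only [Function.onFun, Set.disjoint_left]
    intro a hai haj
    rcases lt_or_gt_of_ne hij with h | h
    · exact haj.2.2 i h hai.2.1
    · exact hai.2.2 j h haj.2.1
  have hUA : (⋃ i, As i) = A := by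
    apply subset_antisymm
    · exact Set.iUnion_subset fun i a ha => ha.1
    · intro a ha
      obtain ⟨i, hi⟩ := hφ a ha
      have hne : (Finset.univ.filter (fun i => f a = φ i a)).Nonempty :=
        ⟨i, by simp [hi]⟩
      set i₀ := (Finset.univ.filter (fun i => f a = φ i a)).min' hne with hi₀
      have hmem := (Finset.univ.filter (fun i => f a = φ i a)).min'_mem hne
      rw [Finset.mem_filter] at hmem
      refine Set.mem_iUnion.2 ⟨i₀, ha, hmem.2, fun j hj hfj => ?_⟩
      have : i₀ ≤ j := Finset.min'_le _ j (by simp [hfj])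
      exact absurd hj (not_lt.2 this)
  refine ⟨m, As, fun i => φ i '' As i, φ, hφF, hdisj, ?_, hUA, ?_, fun i => rfl⟩
  · intro i j hij
    simp only [Function.onFun, Set.disjoint_left]
    intro b hb hb'
    obtain ⟨a, hai, rfl⟩ := hb
    obtain ⟨a', haj, ha'⟩ := hb'
    have hfa : f a = f a' := by
      rw [hai.2.1, haj.2.1, ha']
    have : a = a' := hinj hai.1 haj.1 hfa
    subst this
    exact Set.disjoint_left.1 (hdisj hij) hai haj
  · rw [← himg]
    apply subset_antisymm
    · intro b hb
      obtain ⟨i, hi⟩ := Set.mem_iUnion.1 hb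
      obtain ⟨a, ha, rfl⟩ := hi
      exact ⟨a, ha.1, ha.2.1⟩
    · rintro b ⟨a, ha, rfl⟩
      have : a ∈ ⋃ i, As i := hUA.symm ▸ ha
      obtain ⟨i, hi⟩ := Set.mem_iUnion.1 this
      exact Set.mem_iUnion.2 ⟨i, ⟨a, hi, hi.2.1.symm⟩⟩

lemma fn_of_equidec {G : Type*} {F : Subgroup (Equiv.Perm G)} {A B : Set G}
    (h : Equidec F A B) : ∃ f : G → G, Set.InjOn f A ∧ f '' A = B ∧ PWpc F A f := by
  classical
  obtain ⟨m, As, Bs, φ, hφF, hA, hB, hUA, hUB, himg⟩ := h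
  set f : G → G := fun a => if h : ∃ i, a ∈ As i then φ (Classical.choose h) a else a with hf
  have key : ∀ a ∈ A, ∃ i, a ∈ As i ∧ f a = φ i a := by
    intro a ha
    have hex : ∃ i, a ∈ As i := by
      rw [← hUA] at ha; exact Set.mem_iUnion.1 ha
    exact ⟨Classical.choose hex, Classical.choose_spec hex, dif_pos hex⟩
  have hmemB : ∀ a ∈ A, ∀ i, a ∈ As i → f a = φ i a ∧ f a ∈ Bs i := by
    intro a ha i hi
    obtain ⟨j, hj, hfj⟩ := key a ha
    have hij : j = i := by
      by_contra hne
      exact Set.disjoint_left.1 (hA hne) hj hi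
    subst hij
    exact ⟨hfj, (himg j) ▸ ⟨a, hj, hfj.symm⟩⟩
  have hinj : Set.InjOn f A := by
    intro a ha a' ha' hfe
    obtain ⟨i, hi, hfi⟩ := key a ha
    obtain ⟨j, hj, hfj⟩ := key a' ha'
    have hij : i = j := by
      by_contra hne
      have h1 : f a ∈ Bs i := (hmemB a ha i hi).2
      have h2 : f a ∈ Bs j := hfe ▸ (hmemB a' ha' j hj).2
      exact Set.disjoint_left.1 (hB hne) h1 h2
    subst hij
    exact (φ i).injective (hfi ▸ hfj ▸ hfe)
  refine ⟨f, hinj, ?_, m, φ, hφF, fun a ha => ⟨(key a ha).choose, (key a ha).choose_spec.2⟩⟩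
  apply subset_antisymm
  · rintro b ⟨a, ha, rfl⟩
    obtain ⟨i, hi, hfi⟩ := key a ha
    exact hUB ▸ Set.mem_iUnion.2 ⟨i, (hmemB a ha i hi).2⟩
  · intro b hb
    rw [← hUB] at hb
    obtain ⟨i, hi⟩ := Set.mem_iUnion.1 hb
    rw [← himg i] at hi
    obtain ⟨a, ha, rfl⟩ := hi
    have haA : a ∈ A := hUA ▸ Set.mem_iUnion.2 ⟨i, ha⟩
    exact ⟨a, haA, (hmemB a haA i ha).1⟩

lemma sb_main {G : Type*} [Nonempty G] {F : Subgroup (Equiv.Perm G)} {A B : Set G}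
    {f g : G → G}
    (hf : Set.InjOn f A) (hfB : f '' A ⊆ B) (hfp : PWpc F A f)
    (hg : Set.InjOn g B) (hgA : g '' B ⊆ A) (hgp : PWpc F B g) :
    ∃ h : G → G, Set.InjOn h A ∧ h '' A = B ∧ PWpc F A h := by
  classical
  set T : ℕ → Set G := fun n => (fun S => g '' (f '' S))^[n] (A \ g '' B) with hT
  have hT0 : T 0 = A \ g '' B := rfl
  have hTsucc : ∀ n, T (n + 1) = g '' (f '' T n) := fun n =>
    Function.iterate_succ_apply' _ _ _
  have hTA : ∀ n, T n ⊆ A := by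
    intro n
    induction n with
    | zero => exact Set.diff_subset
    | succ k ih =>
      rw [hTsucc k]
      refine subset_trans (Set.image_mono (f := g) ?_) hgA
      exact subset_trans (Set.image_mono (f := f) ih) hfB
  set X : Set G := ⋃ n, T n with hX
  have hXA : X ⊆ A := Set.iUnion_subset hTA
  have hfXB : f '' X ⊆ B := subset_trans (Set.image_mono (f := f) hXA) hfB
  -- the key claim
  have key2 : g '' (B \ f '' X) = A \ X := by
    apply subset_antisymm
    · rintro a ⟨b, ⟨hbB, hbf⟩, rfl⟩
      refine ⟨hgA ⟨b, hbB, rfl⟩, ?_⟩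
      intro hgb
      obtain ⟨n, hn⟩ := Set.mem_iUnion.1 hgb
      cases n with
      | zero => exact hn.2 ⟨b, hbB, rfl⟩
      | succ k =>
        rw [hTsucc k] at hn
        obtain ⟨c, hc, hgc⟩ := hn
        have hcB : c ∈ B := hfB (Set.image_mono (f := f) (hTA k) hc)
        have : c = b := hg hcB hbB hgc
        subst this
        exact hbf (Set.image_mono (f := f) (Set.subset_iUnion T k) hc)
    · rintro a ⟨haA, haX⟩
      have h0 : a ∉ T 0 := fun h => haX (Set.mem_iUnion.2 ⟨0, h⟩)
      have hagB : a ∈ g '' B := by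
        by_contra h
        exact h0 ⟨haA, h⟩
      obtain ⟨b, hbB, rfl⟩ := hagB
      refine ⟨b, ⟨hbB, fun hbf => ?_⟩, rfl⟩
      rw [Set.image_iUnion] at hbf
      obtain ⟨k, hk⟩ := Set.mem_iUnion.1 hbf
      exact haX (Set.mem_iUnion.2 ⟨k + 1, (hTsucc k) ▸ ⟨b, hk, rfl⟩⟩)
  set ginv : G → G := Function.invFunOn g B with hgi
  have hginv : ∀ b ∈ B, ginv (g b) = b := fun b hb => hg.leftInvOn_invFunOn hb
  have hcompl : ginv '' (A \ X) = B \ f '' X := by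
    rw [← key2, hg.invFunOn_image Set.diff_subset]
  set h : G → G := fun a => if a ∈ X then f a else ginv a with hh
  have hhX : ∀ a ∈ X, h a = f a := fun a ha => if_pos ha
  have hhY : ∀ a, a ∉ X → h a = ginv a := fun a ha => if_neg ha
  have himgX : h '' X = f '' X := Set.image_congr hhX
  have himgY : h '' (A \ X) = B \ f '' X := by
    rw [← hcompl]
    exact Set.image_congr fun a ha => hhY a ha.2
  have himg : h '' A = B := by
    rw [← Set.union_diff_cancel hXA, Set.image_union, himgX, himgY,
      Set.union_diff_cancel hfXB]
  have hinj : Set.InjOn h A := by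
    intro a ha a' ha' he
    by_cases hax : a ∈ X <;> by_cases hax' : a' ∈ X
    · exact hf (hXA hax) (hXA hax') (by rwa [hhX a hax, hhX a' hax'] at he)
    · exfalso
      have h1 : h a ∈ f '' X := hhX a hax ▸ ⟨a, hax, (hhX a hax).symm ▸ rfl⟩
      have h2 : h a' ∈ B \ f '' X := himgY ▸ ⟨a', ⟨ha', hax'⟩, rfl⟩
      rw [he] at h1
      exact h2.2 h1
    · exfalso
      have h1 : h a' ∈ f '' X := ⟨a', hax', (hhX a' hax').symm⟩
      have h2 : h a ∈ B \ f '' X := himgY ▸ ⟨a, ⟨ha, hax⟩, rfl⟩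
      rw [← he] at h1
      exact h2.2 h1
    · -- both outside X : use that A \ X ⊆ g '' B and ginv is injective there
      have hmem : ∀ c ∈ A, c ∉ X → c ∈ g '' B := by
        intro c hc hcx
        by_contra hcg
        exact hcx (Set.mem_iUnion.2 ⟨0, hc, hcg⟩)
      obtain ⟨b, hbB, rfl⟩ := hmem a ha hax
      obtain ⟨b', hbB', rfl⟩ := hmem a' ha' hax'
      rw [hhY _ hax, hhY _ hax', hginv b hbB, hginv b' hbB'] at he
      rw [he]
  refine ⟨h, hinj, himg, ?_⟩
  obtain ⟨m, φ, hφF, hφ⟩ := hfp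
  obtain ⟨n, ψ, hψF, hψ⟩ := hgp
  refine ⟨m + n, fun k => if hk : (k : ℕ) < m then φ ⟨k, hk⟩ else (ψ ⟨(k : ℕ) - m, by
    omega⟩)⁻¹, fun k => ?_, fun a ha => ?_⟩
  · by_cases hk : (k : ℕ) < m
    · simp only [dif_pos hk]; exact hφF _
    · simp only [dif_neg hk]; exact F.inv_mem (hψF _)
  · by_cases hax : a ∈ X
    · obtain ⟨i, hi⟩ := hφ a ha
      refine ⟨⟨i, by omega⟩, ?_⟩
      have hlt : (i : ℕ) < m := i.2
      simp only [Fin.val_mk, dif_pos hlt, Fin.eta]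
      rw [hhX a hax]; exact hi
    · have hmem : a ∈ g '' B := by
        by_contra hcg
        exact hax (Set.mem_iUnion.2 ⟨0, ha, hcg⟩)
      obtain ⟨b, hbB, rfl⟩ := hmem
      obtain ⟨j, hj⟩ := hψ b hbB
      refine ⟨⟨m + j, by omega⟩, ?_⟩
      have hnotlt : ¬ (m + (j : ℕ) < m) := by omega
      have hjj : (⟨m + (j : ℕ) - m, by omega⟩ : Fin n) = j := by ext; simp
      simp only [Fin.val_mk, dif_neg hnotlt, hjj]
      rw [hhY _ hax, hginv b hbB, hj, Equiv.Perm.inv_def, Equiv.symm_apply_apply]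

/-- Schröder–Bernstein for `F`-equidecomposability: if `A ≤ B` and `B ≤ A`
then `A ≅ B`. -/
theorem stmt5 {G : Type*} (F : Subgroup (Equiv.Perm G)) (A B : Set G)
    (hAB : ∃ C ⊆ B, Equidec F A C) (hBA : ∃ D ⊆ A, Equidec F B D) :
    Equidec F A B := by
  rcases isEmpty_or_nonempty G with hG | hG
  · refine ⟨0, Fin.elim0, Fin.elim0, Fin.elim0, fun i => i.elim0, ?_, ?_, ?_, ?_, fun i => i.elim0⟩
    · intro i; exact i.elim0
    · intro i; exact i.elim0
    · rw [Set.iUnion_of_empty, Set.eq_empty_of_isEmpty A]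
    · rw [Set.iUnion_of_empty, Set.eq_empty_of_isEmpty B]
  · obtain ⟨C, hCB, hAC⟩ := hAB
    obtain ⟨D, hDA, hBD⟩ := hBA
    obtain ⟨f, hfinj, hfimg, hfp⟩ := fn_of_equidec hAC
    obtain ⟨g, hginj, hgimg, hgp⟩ := fn_of_equidec hBD
    obtain ⟨h, h1, h2, h3⟩ := sb_main hfinj (by rw [hfimg]; exact hCB) hfp
      hginj (by rw [hgimg]; exact hDA) hgp
    exact equidec_of_fn h1 h2 h3
end

section
/- Let G be a set and F a subgroup of the group of bijections of G. Then G is F-amenable if and only if G admits no F-paradoxical decomposition (Tarski's alternative for F-actions). -/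
/-- An `F`-paradoxical decomposition of `G`: a partition of `G` into nonempty
pieces `A₁,…,Aₙ,B₁,…,Bₘ` together with bijections in `F` such that the
images of the `A`-pieces partition `G` and the images of the `B`-pieces partition `G`. -/
def Paradoxical {G : Type*} (F : Set (Equiv.Perm G)) : Prop :=
  ∃ (n m : ℕ) (A : Fin n → Set G) (B : Fin m → Set G)
    (φ : Fin n → Equiv.Perm G) (ψ : Fin m → Equiv.Perm G),
    (∀ i, φ i ∈ F) ∧ (∀ j, ψ j ∈ F) ∧
    (∀ i, (A i).Nonempty) ∧ (∀ j, (B j).Nonempty) ∧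
    Pairwise (Function.onFun Disjoint A) ∧
    Pairwise (Function.onFun Disjoint B) ∧
    (∀ i j, Disjoint (A i) (B j)) ∧
    ((⋃ i, A i) ∪ ⋃ j, B j) = Set.univ ∧
    Pairwise (Function.onFun Disjoint (fun i => (φ i) '' (A i))) ∧
    (⋃ i, (φ i) '' (A i)) = Set.univ ∧
    Pairwise (Function.onFun Disjoint (fun j => (ψ j) '' (B j))) ∧
    (⋃ j, (ψ j) '' (B j)) = Set.univ

/-- A finitely additive probability measure on the power set of G. -/
def IsFAProb {G : Type*} (μ : Set G → ℝ) : Prop :=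
  μ Set.univ = 1 ∧ (∀ A : Set G, 0 ≤ μ A) ∧
  ∀ A B : Set G, Disjoint A B → μ (A ∪ B) = μ A + μ B


namespace TarskiAux
noncomputable section
variable {G : Type*}
noncomputable local instance : DecidableEq G := Classical.decEq G
noncomputable local instance : DecidableEq (Equiv.Perm G) := Classical.decEq _
open scoped Classical
open Set Filter


noncomputable def KSet (K : Finset (Equiv.Perm G)) (A : Finset G) : Finset G :=
  A.biUnion (fun x => K.image (fun φ => φ x))

lemma mem_KSet {K : Finset (Equiv.Perm G)} {A : Finset G} {y : G} :
    y ∈ KSet K A ↔ ∃ φ ∈ K, ∃ x ∈ A, y = φ x := by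
  simp [KSet]; tauto

lemma subset_KSet {K : Finset (Equiv.Perm G)} (h1 : (1 : Equiv.Perm G) ∈ K) (A : Finset G) :
    A ⊆ KSet K A := by
  intro x hx; exact mem_KSet.2 ⟨1, h1, x, hx, rfl⟩

lemma image_subset_KSet {K : Finset (Equiv.Perm G)} {φ : Equiv.Perm G} (hφ : φ ∈ K)
    (A : Finset G) : A.image φ ⊆ KSet K A := by
  intro y hy
  obtain ⟨x, hx, rfl⟩ := Finset.mem_image.1 hy
  exact mem_KSet.2 ⟨φ, hφ, x, hx, rfl⟩

def Doubling (F : Subgroup (Equiv.Perm G)) : Prop :=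
  ∃ K : Finset (Equiv.Perm G), (↑K ⊆ (F : Set (Equiv.Perm G))) ∧
    ∀ A : Finset G, 2 * A.card ≤ (KSet K A).card

/-- iterated product sets -/
noncomputable def PowK (K : Finset (Equiv.Perm G)) : ℕ → Finset (Equiv.Perm G) :=
  fun m => Nat.rec {1} (fun _ ih => (K ×ˢ ih).image (fun p => p.1 * p.2)) m

@[simp] lemma PowK_zero (K : Finset (Equiv.Perm G)) : PowK K 0 = {1} := rfl
@[simp] lemma PowK_succ (K : Finset (Equiv.Perm G)) (m : ℕ) :
    PowK K (m+1) = (K ×ˢ PowK K m).image (fun p => p.1 * p.2) := rfl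

lemma KSet_PowK_zero (K : Finset (Equiv.Perm G)) (A : Finset G) : KSet (PowK K 0) A = A := by
  ext y; simp [mem_KSet]

lemma KSet_PowK_succ (K : Finset (Equiv.Perm G)) (m : ℕ) (A : Finset G) :
    KSet (PowK K (m+1)) A = KSet K (KSet (PowK K m) A) := by
  ext y
  simp only [mem_KSet, PowK_succ, Finset.mem_image, Finset.mem_product]
  constructor
  · rintro ⟨χ, ⟨⟨φ, ψ⟩, ⟨hφ, hψ⟩, rfl⟩, x, hx, rfl⟩
    exact ⟨φ, hφ, ψ x, ⟨ψ, hψ, x, hx, rfl⟩, rfl⟩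
  · rintro ⟨φ, hφ, z, ⟨ψ, hψ, x, hx, rfl⟩, rfl⟩
    exact ⟨φ * ψ, ⟨⟨φ, ψ⟩, ⟨hφ, hψ⟩, rfl⟩, x, hx, rfl⟩

lemma PowK_subset {F : Subgroup (Equiv.Perm G)} {K : Finset (Equiv.Perm G)}
    (hK : ↑K ⊆ (F : Set (Equiv.Perm G))) (m : ℕ) :
    ↑(PowK K m) ⊆ (F : Set (Equiv.Perm G)) := by
  induction m with
  | zero => intro φ hφ; simp at hφ; subst hφ; exact one_mem F
  | succ m ih =>
    intro χ hχ
    simp only [PowK_succ, Finset.coe_image, Set.mem_image, Finset.mem_coe,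
      Finset.mem_product] at hχ
    obtain ⟨⟨φ, ψ⟩, ⟨hφ, hψ⟩, rfl⟩ := hχ
    exact mul_mem (hK hφ) (ih hψ)

theorem folner_of_not_doubling (F : Subgroup (Equiv.Perm G)) (hD : ¬ Doubling F)
    (K : Finset (Equiv.Perm G)) (hK : ↑K ⊆ (F : Set (Equiv.Perm G)))
    {ε : ℝ} (hε : 0 < ε) :
    ∃ A : Finset G, A.Nonempty ∧ ∀ φ ∈ K, ((A.image φ \ A).card : ℝ) ≤ ε * A.card := by
  classical
  set K' : Finset (Equiv.Perm G) := insert 1 K with hK'def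
  have hK' : ↑K' ⊆ (F : Set (Equiv.Perm G)) := by
    intro φ hφ
    rcases Finset.mem_insert.1 hφ with h | h
    · subst h; exact one_mem F
    · exact hK h
  have h1K' : (1 : Equiv.Perm G) ∈ K' := Finset.mem_insert_self _ _
  -- choose n with 2 ≤ (1+ε)^n
  obtain ⟨n, hn⟩ := exists_nat_ge (1/ε)
  have hpow : (2 : ℝ) ≤ (1+ε)^n := by
    have h1 : 1 + (n : ℝ) * ε ≤ (1+ε)^n := by
      have := one_add_mul_le_pow (a := ε) (by linarith) n
      linarith
    have h2 : (1 : ℝ) ≤ (n : ℝ) * ε := by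
      rw [div_le_iff₀ hε] at hn
      linarith
    linarith
  -- apply ¬Doubling to PowK K' n
  simp only [Doubling, not_exists, not_and, not_forall, not_le] at hD
  obtain ⟨A, hA⟩ := hD (PowK K' n) (PowK_subset hK' n)
  have hAne : A.Nonempty := by
    rcases Finset.eq_empty_or_nonempty A with rfl | h
    · simp [KSet] at hA
    · exact h
  -- the chain
  set a : ℕ → ℕ := fun i => (KSet (PowK K' i) A).card with ha
  have hsub : ∀ i, KSet (PowK K' i) A ⊆ KSet K' (KSet (PowK K' i) A) := fun i =>
    subset_KSet h1K' _
  have hKsucc : ∀ i, KSet K' (KSet (PowK K' i) A) = KSet (PowK K' (i+1)) A := fun i =>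
    (KSet_PowK_succ K' i A).symm
  have hmono : ∀ i, a i ≤ a (i+1) := by
    intro i
    apply Finset.card_le_card
    rw [← hKsucc i]; exact hsub i
  have hAsub : ∀ i, A ⊆ KSet (PowK K' i) A := by
    intro i
    induction i with
    | zero => rw [KSet_PowK_zero]
    | succ i ih => rw [← hKsucc i]; exact ih.trans (hsub i)
  have ha0 : a 0 = A.card := by simp only [ha]; rw [KSet_PowK_zero]
  have ha0pos : 0 < a 0 := by rw [ha0]; exact Finset.card_pos.2 hAne
  have han : a n < 2 * a 0 := by rw [ha0]; exact hA
  -- find good step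
  have key : ∃ i, ((a (i+1) : ℝ)) < (1+ε) * a i := by
    by_contra hcon
    push_neg at hcon
    have growth : ∀ i, (1+ε)^i * a 0 ≤ (a i : ℝ) := by
      intro i
      induction i with
      | zero => simp
      | succ i ih =>
        calc (1+ε)^(i+1) * a 0 = (1+ε) * ((1+ε)^i * a 0) := by ring
        _ ≤ (1+ε) * a i := by
            apply mul_le_mul_of_nonneg_left ih (by linarith)
        _ ≤ a (i+1) := hcon i
    have h1 : (1+ε)^n * a 0 ≤ (a n : ℝ) := growth n
    have h2 : (a n : ℝ) < 2 * a 0 := by exact_mod_cast han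
    have h3 : (2 : ℝ) * a 0 ≤ (1+ε)^n * a 0 := by
      apply mul_le_mul_of_nonneg_right hpow (by positivity)
    linarith
  obtain ⟨i, hi⟩ := key
  refine ⟨KSet (PowK K' i) A, ?_, ?_⟩
  · obtain ⟨x, hx⟩ := hAne
    exact ⟨x, hAsub i hx⟩
  · intro φ hφ
    set B := KSet (PowK K' i) A with hB
    have hBsub : B ⊆ KSet K' B := hsub i
    have himg : B.image φ \ B ⊆ KSet K' B \ B :=
      Finset.sdiff_subset_sdiff (image_subset_KSet (Finset.mem_insert_of_mem hφ) B)
        (le_refl _)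
    have hcard : (B.image φ \ B).card ≤ (KSet K' B).card - B.card := by
      calc (B.image φ \ B).card ≤ (KSet K' B \ B).card := Finset.card_le_card himg
      _ = (KSet K' B).card - B.card := Finset.card_sdiff_of_subset hBsub
    have hcardR : ((B.image φ \ B).card : ℝ) ≤ ((KSet K' B).card : ℝ) - B.card := by
      have := Finset.card_le_card hBsub
      calc ((B.image φ \ B).card : ℝ) ≤ (((KSet K' B).card - B.card : ℕ) : ℝ) := by
            exact_mod_cast hcard
      _ = ((KSet K' B).card : ℝ) - B.card := by
            push_cast [Nat.cast_sub this]; ring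
    have : ((KSet K' B).card : ℝ) < (1+ε) * B.card := by
      rw [hKsucc i]
      exact hi
    have hBc : (B.card : ℝ) = a i := by rw [ha]
    rw [hBc] at *
    linarith [hcardR, this]



/-- counting function -/
noncomputable def cnt (B : Set G) (A : Finset G) : ℝ :=
  ((A.filter (· ∈ B)).card : ℝ) / A.card

def Idx (G : Type*) := {A : Finset G // A.Nonempty}

noncomputable def Tset (φ : Equiv.Perm G) (ε : ℝ) : Set (Idx G) :=
  {A : Idx G | ((A.1.image φ \ A.1).card : ℝ) ≤ ε * A.1.card}

def gens (F : Subgroup (Equiv.Perm G)) : Set (Set (Idx G)) :=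
  {S | ∃ φ ∈ (F : Set (Equiv.Perm G)), ∃ ε : ℝ, 0 < ε ∧ S = Tset φ ε}

/-- Følner hypothesis -/
def Folner (F : Subgroup (Equiv.Perm G)) : Prop :=
  ∀ K : Finset (Equiv.Perm G), ↑K ⊆ (F : Set (Equiv.Perm G)) → ∀ ε : ℝ, 0 < ε →
      ∃ A : Finset G, A.Nonempty ∧ ∀ φ ∈ K, ((A.image φ \ A).card : ℝ) ≤ ε * A.card

lemma FIP (F : Subgroup (Equiv.Perm G)) (hF : Folner F) :
    ∀ t : Set (Set (Idx G)), t ⊆ gens F → t.Finite → (⋂₀ t).Nonempty := by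
  classical
  intro t hsub hfin
  have hchoice : ∀ S ∈ t, ∃ φ : Equiv.Perm G, φ ∈ (F : Set (Equiv.Perm G)) ∧
      ∃ ε : ℝ, 0 < ε ∧ S = Tset φ ε := by
    intro S hS
    obtain ⟨φ, hφ, ε, hε, hSe⟩ := hsub hS
    exact ⟨φ, hφ, ε, hε, hSe⟩
  choose! f hfF e he hTe using hchoice
  rcases t.eq_empty_or_nonempty with rfl | htne
  · obtain ⟨A, hA, -⟩ := hF ∅ (by simp) 1 one_pos
    exact ⟨⟨A, hA⟩, by simp; exact Set.mem_univ _⟩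
  · have hKF : ↑(hfin.toFinset.image f) ⊆ (F : Set (Equiv.Perm G)) := by
      intro φ hφ
      simp only [Finset.coe_image, Set.mem_image, Finset.mem_coe,
        Set.Finite.mem_toFinset] at hφ
      obtain ⟨S, hS, rfl⟩ := hφ
      exact hfF S hS
    have hEne : (hfin.toFinset.image e).Nonempty := by
      obtain ⟨S, hS⟩ := htne
      exact ⟨e S, Finset.mem_image.2 ⟨S, (Set.Finite.mem_toFinset hfin).2 hS, rfl⟩⟩
    set εm : ℝ := (hfin.toFinset.image e).min' hEne with hεm
    have hεmpos : 0 < εm := by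
      obtain ⟨S, hS, hSe⟩ := Finset.mem_image.1 (Finset.min'_mem _ hEne)
      rw [hεm, ← hSe]
      exact he S ((Set.Finite.mem_toFinset hfin).1 hS)
    obtain ⟨A, hAne, hAbd⟩ := hF _ hKF εm hεmpos
    refine ⟨⟨A, hAne⟩, ?_⟩
    intro S hS
    rw [hTe S hS]
    have hfK : f S ∈ hfin.toFinset.image f :=
      Finset.mem_image.2 ⟨S, (Set.Finite.mem_toFinset hfin).2 hS, rfl⟩
    have h1 : ((A.image (f S) \ A).card : ℝ) ≤ εm * A.card := hAbd (f S) hfK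
    have h2 : εm ≤ e S :=
      Finset.min'_le _ _ (Finset.mem_image.2 ⟨S, (Set.Finite.mem_toFinset hfin).2 hS, rfl⟩)
    exact le_trans h1 (mul_le_mul_of_nonneg_right h2 (Nat.cast_nonneg _))

lemma filter_union_count {B C : Set G} (h : Disjoint B C) (A : Finset G) :
    (A.filter (· ∈ B ∪ C)).card = (A.filter (· ∈ B)).card + (A.filter (· ∈ C)).card := by
  rw [show A.filter (· ∈ B ∪ C) = A.filter (· ∈ B) ∪ A.filter (· ∈ C) by
    ext x; simp [Set.mem_union]; tauto]
  apply Finset.card_union_of_disjoint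
  rw [Finset.disjoint_left]
  intro x hx hx'
  simp only [Finset.mem_filter] at hx hx'
  exact Set.disjoint_left.1 h hx.2 hx'.2

lemma count_sub_count {X Y : Finset G} (p : G → Prop) :
    (X.filter p).card ≤ (Y.filter p).card + (X \ Y).card := by
  have h1 : X.filter p ⊆ Y.filter p ∪ (X \ Y) := by
    intro x hx
    simp only [Finset.mem_filter] at hx
    by_cases hy : x ∈ Y
    · exact Finset.mem_union_left _ (Finset.mem_filter.2 ⟨hy, hx.2⟩)
    · exact Finset.mem_union_right _ (Finset.mem_sdiff.2 ⟨hx.1, hy⟩)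
  calc (X.filter p).card ≤ (Y.filter p ∪ (X \ Y)).card := Finset.card_le_card h1
  _ ≤ (Y.filter p).card + (X \ Y).card := Finset.card_union_le _ _

lemma sdiff_card_symm {A X : Finset G} (h : X.card = A.card) :
    (A \ X).card = (X \ A).card := by
  have h1 : (A \ X).card + (A ∩ X).card = A.card := by
    rw [← Finset.card_union_of_disjoint
      (Finset.sdiff_disjoint.mono_right Finset.inter_subset_right), Finset.sdiff_union_inter]
  have h2 : (X \ A).card + (X ∩ A).card = X.card := by
    rw [← Finset.card_union_of_disjoint
      (Finset.sdiff_disjoint.mono_right Finset.inter_subset_right), Finset.sdiff_union_inter]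
  rw [Finset.inter_comm] at h2
  omega

/-- image counting: counting `φ '' B` on `A` equals counting `B` on `φ⁻¹ '' A`. -/
lemma count_image (φ : Equiv.Perm G) (B : Set G) (A : Finset G) :
    (A.filter (· ∈ φ '' B)).card = ((A.image (fun x => φ⁻¹ x)).filter (· ∈ B)).card := by
  have himg : (A.filter (· ∈ φ '' B)).image (fun x => φ⁻¹ x)
      = (A.image (fun x => φ⁻¹ x)).filter (· ∈ B) := by
    ext y
    constructor
    · intro hy
      obtain ⟨x, hx, rfl⟩ := Finset.mem_image.1 hy
      obtain ⟨hxA, hxB⟩ := Finset.mem_filter.1 hx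
      apply Finset.mem_filter.2
      refine ⟨Finset.mem_image.2 ⟨x, hxA, rfl⟩, ?_⟩
      obtain ⟨b, hb, hbx⟩ := hxB
      have hb' : φ⁻¹ x = b := by rw [← hbx]; simp
      rwa [hb']
    · intro hy
      obtain ⟨hyim, hyB⟩ := Finset.mem_filter.1 hy
      obtain ⟨x, hxA, rfl⟩ := Finset.mem_image.1 hyim
      exact Finset.mem_image.2 ⟨x, Finset.mem_filter.2 ⟨hxA, ⟨φ⁻¹ x, hyB, by simp⟩⟩, rfl⟩
  have hinj : Function.Injective (fun x : G => φ⁻¹ x) := fun a b hab => by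
    simpa using congrArg φ hab
  rw [← himg, Finset.card_image_of_injective _ hinj]

theorem measure_of_folner (F : Subgroup (Equiv.Perm G)) (hF : Folner F) :
    ∃ μ : Set G → ℝ, IsFAProb μ ∧
      ∀ φ ∈ (F : Set (Equiv.Perm G)), ∀ A : Set G, μ (φ '' A) = μ A := by
  have hLne : (Filter.generate (gens F)).NeBot := by
    rw [Filter.neBot_iff]
    intro hbot
    have : ∅ ∈ Filter.generate (gens F) := by rw [hbot]; exact Filter.mem_bot
    rw [Filter.mem_generate_iff] at this
    obtain ⟨t, hts, htf, hint⟩ := this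
    obtain ⟨A, hA⟩ := FIP F hF t hts htf
    exact Set.eq_empty_iff_forall_notMem.1 (Set.subset_empty_iff.1 hint) A hA
  set U : Ultrafilter (Idx G) := @Ultrafilter.of _ _ hLne with hU
  have hLU : ↑U ≤ Filter.generate (gens F) := @Ultrafilter.of_le _ _ hLne
  have hgenU : ∀ φ ∈ (F : Set (Equiv.Perm G)), ∀ ε : ℝ, 0 < ε → Tset φ ε ∈ U := by
    intro φ hφ ε hε
    apply hLU
    apply Filter.mem_generate_iff.2
    refine ⟨{Tset φ ε}, ?_, Set.finite_singleton _, by simp⟩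
    intro S hS
    rw [Set.mem_singleton_iff] at hS
    subst hS
    exact ⟨φ, hφ, ε, hε, rfl⟩
  have hcardpos : ∀ A : Idx G, (0:ℝ) < A.1.card := fun A => by
    exact_mod_cast Finset.card_pos.2 A.2
  have hfmem : ∀ B : Set G, ∀ A : Idx G, cnt B A.1 ∈ Set.Icc (0:ℝ) 1 := by
    intro B A
    constructor
    · apply div_nonneg (by positivity) (by positivity)
    · rw [cnt, div_le_one (hcardpos A)]
      exact_mod_cast Finset.card_le_card (Finset.filter_subset _ _)
  have hlim : ∀ B : Set G, ∃ x, x ∈ Set.Icc (0:ℝ) 1 ∧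
      Filter.Tendsto (fun A : Idx G => cnt B A.1) ↑U (nhds x) := by
    intro B
    obtain ⟨x, hx, hle⟩ := isCompact_Icc.ultrafilter_le_nhds
      (U.map (fun A : Idx G => cnt B A.1))
      (by rw [Ultrafilter.coe_map, Filter.le_principal_iff, Filter.mem_map]
          exact Filter.univ_mem' (fun A => hfmem B A))
    exact ⟨x, hx, hle⟩
  choose μ hμmem hμlim using hlim
  refine ⟨μ, ⟨?_, fun B => (hμmem B).1, ?_⟩, ?_⟩
  · -- μ univ = 1
    have h1 : Filter.Tendsto (fun A : Idx G => cnt (Set.univ : Set G) A.1) ↑U (nhds 1) := by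
      have : (fun A : Idx G => cnt (Set.univ : Set G) A.1) = fun _ => (1:ℝ) := by
        funext A
        rw [cnt]
        simp only [Set.mem_univ, Finset.filter_true]
        exact div_self (ne_of_gt (hcardpos A))
      rw [this]
      exact tendsto_const_nhds
    exact tendsto_nhds_unique (hμlim _) h1
  · -- additivity
    intro B C hBC
    have h1 : Filter.Tendsto (fun A : Idx G => cnt (B ∪ C) A.1) ↑U (nhds (μ B + μ C)) := by
      have heq : (fun A : Idx G => cnt (B ∪ C) A.1) =
          fun A : Idx G => cnt B A.1 + cnt C A.1 := by
        funext A
        have h := filter_union_count hBC A.1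
        have h' := congrArg (fun n : ℕ => (n : ℝ)) h
        push_cast at h'
        rw [cnt, cnt, cnt, ← add_div]
        congr 1
        convert h' using 2 <;> (congr 1; ext x; simp)
      rw [heq]
      exact Filter.Tendsto.add (hμlim B) (hμlim C)
    exact tendsto_nhds_unique (hμlim _) h1
  · -- invariance
    intro φ hφ B
    have hφinv : φ⁻¹ ∈ (F : Set (Equiv.Perm G)) := inv_mem hφ
    -- the difference tends to 0
    have hdiff : Filter.Tendsto
        (fun A : Idx G => cnt (φ '' B) A.1 - cnt B A.1) ↑U (nhds 0) := by
      rw [NormedAddCommGroup.tendsto_nhds_zero]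
      intro ε hε
      have hmem := hgenU φ⁻¹ hφinv (ε/4) (by linarith)
      apply Filter.mem_of_superset hmem
      intro A hA
      simp only [Tset, Set.mem_setOf_eq] at hA
      have hn := hcardpos A
      -- counting bound
      have hkey : |(((A.1.filter (· ∈ φ '' B)).card : ℝ)) - ((A.1.filter (· ∈ B)).card : ℝ)|
          ≤ 2 * (ε/4) * A.1.card := by
        rw [count_image φ B A.1]
        set X := A.1.image (fun x => φ⁻¹ x) with hX
        have hinj : Function.Injective (fun x : G => φ⁻¹ x) := fun a b hab => by
          simpa using congrArg φ hab
        have hXcard : X.card = A.1.card := Finset.card_image_of_injective _ hinj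
        have hXA : ((X \ A.1).card : ℝ) ≤ (ε/4) * A.1.card := hA
        have hAX : ((A.1 \ X).card : ℝ) ≤ (ε/4) * A.1.card := by
          rw [sdiff_card_symm hXcard]; exact hA
        have hb1 : ((X.filter (· ∈ B)).card : ℝ) ≤ ((A.1.filter (· ∈ B)).card : ℝ)
            + ((X \ A.1).card : ℝ) := by exact_mod_cast count_sub_count (· ∈ B)
        have hb2 : ((A.1.filter (· ∈ B)).card : ℝ) ≤ ((X.filter (· ∈ B)).card : ℝ)
            + ((A.1 \ X).card : ℝ) := by exact_mod_cast count_sub_count (· ∈ B)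
        rw [abs_le]
        constructor <;> nlinarith
      have : |cnt (φ '' B) A.1 - cnt B A.1| ≤ 2 * (ε/4) := by
        rw [cnt, cnt, div_sub_div_same, abs_div, abs_of_pos hn, div_le_iff₀ hn]
        calc |((A.1.filter (· ∈ φ '' B)).card : ℝ) - ((A.1.filter (· ∈ B)).card : ℝ)|
            ≤ 2 * (ε/4) * A.1.card := hkey
        _ = 2 * (ε/4) * A.1.card := rfl
      simp only [Set.mem_setOf_eq]
      calc ‖cnt (φ '' B) A.1 - cnt B A.1‖ = |cnt (φ '' B) A.1 - cnt B A.1| := rfl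
      _ ≤ 2 * (ε/4) := this
      _ < ε := by linarith
    have h2 : Filter.Tendsto (fun A : Idx G => cnt (φ '' B) A.1) ↑U (nhds (μ B + 0)) := by
      have heq : (fun A : Idx G => cnt (φ '' B) A.1) =
          fun A : Idx G => cnt B A.1 + (cnt (φ '' B) A.1 - cnt B A.1) := by
        funext A; ring
      rw [heq]
      exact Filter.Tendsto.add (hμlim B) hdiff
    rw [add_zero] at h2
    exact tendsto_nhds_unique (hμlim _) h2




/-- Piecewise-`F` injection of `S` onto `T`. -/
def PW (F : Subgroup (Equiv.Perm G)) (S T : Set G) : Prop :=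
  ∃ c : G → Equiv.Perm G, (∀ x, c x ∈ F) ∧ (Set.range c).Finite ∧
    Set.InjOn (fun x => c x x) S ∧ (fun x => c x x) '' S = T

lemma pw_symm {F : Subgroup (Equiv.Perm G)} {S T : Set G} (h : PW F S T) : PW F T S := by
  obtain ⟨c, hcF, hcfin, hcinj, hcim⟩ := h
  set e : G → G := fun x => c x x with he
  set inv : G → G := fun y => if h : ∃ a ∈ S, e a = y then h.choose else y with hinv
  have key : ∀ y ∈ T, inv y ∈ S ∧ e (inv y) = y := by
    intro y hy
    have hex : ∃ a ∈ S, e a = y := by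
      rw [← hcim] at hy
      obtain ⟨a, ha, hay⟩ := hy
      exact ⟨a, ha, hay⟩
    rw [hinv]
    simp only [hex, dif_pos]
    exact ⟨hex.choose_spec.1, hex.choose_spec.2⟩
  set c' : G → Equiv.Perm G := fun y => if y ∈ T then (c (inv y))⁻¹ else 1 with hc'
  have hval : ∀ y ∈ T, c' y y = inv y := by
    intro y hy
    rw [hc']
    simp only [hy, if_pos]
    have h2 : c (inv y) (inv y) = y := (key y hy).2
    calc (c (inv y))⁻¹ y = (c (inv y))⁻¹ (c (inv y) (inv y)) := by rw [h2]
    _ = inv y := Equiv.symm_apply_apply _ _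
  refine ⟨c', ?_, ?_, ?_, ?_⟩
  · intro y
    rw [hc']
    by_cases hy : y ∈ T
    · simp only [hy, if_pos]
      exact inv_mem (hcF _)
    · simp only [hy, if_neg, not_false_iff]
      exact one_mem F
  · apply Set.Finite.subset (Set.Finite.union (hcfin.image (·⁻¹)) (Set.finite_singleton 1))
    rintro - ⟨y, rfl⟩
    rw [hc']
    by_cases hy : y ∈ T
    · simp only [hy, if_pos]
      exact Or.inl ⟨c (inv y), Set.mem_range_self _, rfl⟩
    · simp only [hy, if_neg, not_false_iff]
      exact Or.inr rfl
  · intro y₁ h₁ y₂ h₂ hcv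
    have hv : c' y₁ y₁ = c' y₂ y₂ := hcv
    rw [hval y₁ h₁, hval y₂ h₂] at hv
    have e₁ := (key y₁ h₁).2
    have e₂ := (key y₂ h₂).2
    rw [← e₁, ← e₂, hv]
  · apply Set.Subset.antisymm
    · rintro - ⟨y, hy, rfl⟩
      show c' y y ∈ S
      rw [hval y hy]
      exact (key y hy).1
    · intro x hx
      have hyT : e x ∈ T := by rw [← hcim]; exact ⟨x, hx, rfl⟩
      refine ⟨e x, hyT, ?_⟩
      show c' (e x) (e x) = x
      rw [hval _ hyT]
      exact hcinj (key _ hyT).1 hx (key _ hyT).2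

lemma pw_compress {F : Subgroup (Equiv.Perm G)} {C D : Set G}
    (h : PW F Set.univ C) (hCD : C ⊆ Dᶜ) : PW F Set.univ Dᶜ := by
  obtain ⟨c, hcF, hcfin, hcinj, hcim⟩ := h
  set e : G → G := fun x => c x x with he
  set E : Set G := ⋃ n, e^[n] '' D with hE
  have hDE : D ⊆ E := by
    intro x hx
    exact Set.mem_iUnion.2 ⟨0, by simpa using hx⟩
  have heE : ∀ x ∈ E, e x ∈ E := by
    intro x hx
    rw [hE] at hx
    obtain ⟨n, hn⟩ := Set.mem_iUnion.1 hx
    obtain ⟨z, hz, hez⟩ := hn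
    refine Set.mem_iUnion.2 ⟨n + 1, ⟨z, hz, ?_⟩⟩
    rw [Function.iterate_succ_apply', hez]
  have heC : ∀ x, e x ∈ C := by
    intro x
    rw [← hcim]
    exact ⟨x, Set.mem_univ x, rfl⟩
  set c' : G → Equiv.Perm G := fun x => if x ∈ E then c x else 1 with hc'
  have hval_in : ∀ x ∈ E, c' x x = e x := by
    intro x hx; rw [hc']; simp only [hx, if_pos]; rfl
  have hval_out : ∀ x, x ∉ E → c' x x = x := by
    intro x hx; rw [hc']; simp only [hx, if_neg, not_false_iff]
    rfl
  refine ⟨c', ?_, ?_, ?_, ?_⟩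
  · intro x
    rw [hc']
    by_cases hx : x ∈ E
    · simp only [hx, if_pos]; exact hcF x
    · simp only [hx, if_neg, not_false_iff]; exact one_mem F
  · apply Set.Finite.subset (hcfin.union (Set.finite_singleton 1))
    rintro - ⟨x, rfl⟩
    rw [hc']
    by_cases hx : x ∈ E
    · simp only [hx, if_pos]; exact Or.inl (Set.mem_range_self x)
    · simp only [hx, if_neg, not_false_iff]; exact Or.inr rfl
  · intro x₁ _ x₂ _ hv
    have hv : c' x₁ x₁ = c' x₂ x₂ := hv
    by_cases h₁ : x₁ ∈ E <;> by_cases h₂ : x₂ ∈ E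
    · rw [hval_in x₁ h₁, hval_in x₂ h₂] at hv
      exact hcinj (Set.mem_univ _) (Set.mem_univ _) hv
    · rw [hval_in x₁ h₁, hval_out x₂ h₂] at hv
      exact absurd (hv ▸ heE x₁ h₁) h₂
    · rw [hval_out x₁ h₁, hval_in x₂ h₂] at hv
      exact absurd (hv ▸ heE x₂ h₂) h₁
    · rw [hval_out x₁ h₁, hval_out x₂ h₂] at hv
      exact hv
  · apply Set.Subset.antisymm
    · rintro - ⟨x, -, rfl⟩
      show c' x x ∈ Dᶜ
      by_cases hx : x ∈ E
      · rw [hval_in x hx]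
        exact hCD (heC x)
      · rw [hval_out x hx]
        exact fun hD => hx (hDE hD)
    · intro y hy
      by_cases hyE : y ∈ E
      · obtain ⟨n, hn⟩ := Set.mem_iUnion.1 hyE
        obtain ⟨z, hz, hez⟩ := hn
        cases n with
        | zero => exact absurd (by simpa using hez ▸ hz : y ∈ D) hy
        | succ k =>
          refine ⟨e^[k] z, Set.mem_univ _, ?_⟩
          have hzE : e^[k] z ∈ E := Set.mem_iUnion.2 ⟨k, ⟨z, hz, rfl⟩⟩
          show c' _ _ = y
          rw [hval_in _ hzE, ← Function.iterate_succ_apply' e k z]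
          exact hez
      · exact ⟨y, Set.mem_univ _, hval_out y hyE⟩

lemma pw_to_pieces {F : Subgroup (Equiv.Perm G)} {S : Set G} (h : PW F S Set.univ) :
    ∃ (n : ℕ) (A : Fin n → Set G) (φ : Fin n → Equiv.Perm G),
      (∀ i, φ i ∈ (F : Set (Equiv.Perm G))) ∧ (∀ i, (A i).Nonempty) ∧
      Pairwise (Function.onFun Disjoint A) ∧ (⋃ i, A i) = S ∧
      Pairwise (Function.onFun Disjoint (fun i => (φ i) '' (A i))) ∧
      (⋃ i, (φ i) '' (A i)) = Set.univ := by
  obtain ⟨c, hcF, hcfin, hcinj, hcim⟩ := h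
  set e : G → G := fun x => c x x with he
  set R' : Finset (Equiv.Perm G) :=
    hcfin.toFinset.filter (fun π => ({x ∈ S | c x = π} : Set G).Nonempty) with hR'
  set σ := R'.equivFin.symm with hσ
  have key : ∀ π : Equiv.Perm G, π ∈ R' →
      (π ∈ Set.range c ∧ ({x ∈ S | c x = π} : Set G).Nonempty) := by
    intro π hπ
    rw [hR', Finset.mem_filter, Set.Finite.mem_toFinset] at hπ
    exact hπ
  refine ⟨R'.card, fun i => {x ∈ S | c x = (σ i).1}, fun i => (σ i).1, ?_, ?_, ?_, ?_, ?_, ?_⟩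
  · intro i
    obtain ⟨x, hx⟩ := (key _ (σ i).2).1
    show ((σ i).1 : Equiv.Perm G) ∈ (F : Set (Equiv.Perm G))
    rw [← hx]
    exact hcF x
  · intro i
    exact (key _ (σ i).2).2
  · intro i j hij
    have hne : ((σ i).1 : Equiv.Perm G) ≠ (σ j).1 := by
      intro hcontra
      exact hij (R'.equivFin.symm.injective (Subtype.ext hcontra))
    rw [Function.onFun, Set.disjoint_left]
    rintro x ⟨-, hx1⟩ ⟨-, hx2⟩
    exact hne (hx1 ▸ hx2 ▸ rfl)
  · apply Set.Subset.antisymm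
    · intro x hx
      obtain ⟨i, hi⟩ := Set.mem_iUnion.1 hx
      exact hi.1
    · intro x hx
      have hπ : c x ∈ R' := by
        rw [hR', Finset.mem_filter, Set.Finite.mem_toFinset]
        exact ⟨Set.mem_range_self x, ⟨x, hx, rfl⟩⟩
      refine Set.mem_iUnion.2 ⟨R'.equivFin ⟨c x, hπ⟩, hx, ?_⟩
      simp [hσ]
  · -- images pairwise disjoint
    have himg : ∀ i, ((σ i).1 : Equiv.Perm G) '' {x ∈ S | c x = (σ i).1} =
        e '' {x ∈ S | c x = (σ i).1} := by
      intro i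
      apply Set.image_congr
      rintro x ⟨-, hx⟩
      rw [← hx]
    intro i j hij
    rw [Function.onFun, himg i, himg j, Set.disjoint_left]
    rintro y ⟨x₁, ⟨hx₁S, hx₁⟩, rfl⟩ ⟨x₂, ⟨hx₂S, hx₂⟩, hx₂e⟩
    have : x₂ = x₁ := hcinj hx₂S hx₁S hx₂e
    subst this
    have hne : ((σ i).1 : Equiv.Perm G) ≠ (σ j).1 := by
      intro hcontra
      exact hij (R'.equivFin.symm.injective (Subtype.ext hcontra))
    exact hne (hx₁ ▸ hx₂ ▸ rfl)
  · -- images cover univ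
    have himg : ∀ i, ((σ i).1 : Equiv.Perm G) '' {x ∈ S | c x = (σ i).1} =
        e '' {x ∈ S | c x = (σ i).1} := by
      intro i
      apply Set.image_congr
      rintro x ⟨-, hx⟩
      rw [← hx]
    apply Set.Subset.antisymm (Set.subset_univ _)
    intro y _
    have hy : y ∈ e '' S := by rw [hcim]; exact Set.mem_univ y
    obtain ⟨x, hxS, rfl⟩ := hy
    have hπ : c x ∈ R' := by
      rw [hR', Finset.mem_filter, Set.Finite.mem_toFinset]
      exact ⟨Set.mem_range_self x, ⟨x, hxS, rfl⟩⟩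
    refine Set.mem_iUnion.2 ⟨R'.equivFin ⟨c x, hπ⟩, ?_⟩
    rw [himg]
    refine ⟨x, ⟨hxS, ?_⟩, rfl⟩
    simp [hσ]

set_option maxHeartbeats 1000000 in
theorem doubling_paradoxical (F : Subgroup (Equiv.Perm G)) (hD : Doubling F) :
    Paradoxical (F : Set (Equiv.Perm G)) := by
  obtain ⟨K, hKF, hK⟩ := hD
  -- Hall's condition for the bipartite graph (Bool × G) → G
  have hall : ∀ s : Finset (Bool × G),
      s.card ≤ (s.biUnion (fun p => K.image (fun φ => φ p.2))).card := by
    intro s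
    have h1 : s ⊆ (Finset.univ : Finset Bool) ×ˢ s.image Prod.snd := by
      intro p hp
      rw [Finset.mem_product]
      exact ⟨Finset.mem_univ _, Finset.mem_image_of_mem _ hp⟩
    have h2 : s.card ≤ 2 * (s.image Prod.snd).card := by
      calc s.card ≤ ((Finset.univ : Finset Bool) ×ˢ s.image Prod.snd).card :=
            Finset.card_le_card h1
      _ = 2 * (s.image Prod.snd).card := by
            rw [Finset.card_product]
            simp
    have h3 : s.biUnion (fun p => K.image (fun φ => φ p.2)) = KSet K (s.image Prod.snd) := by
      ext y
      rw [KSet]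
      simp only [Finset.mem_biUnion, Finset.mem_image]
      constructor
      · rintro ⟨⟨b, x⟩, hp, hy⟩
        exact ⟨x, ⟨⟨b, x⟩, hp, rfl⟩, hy⟩
      · rintro ⟨x, ⟨⟨b, x'⟩, hp, rfl⟩, hy⟩
        exact ⟨⟨b, x'⟩, hp, hy⟩
    rw [h3]
    exact h2.trans (hK _)
  obtain ⟨u, huinj, humem⟩ := (Finset.all_card_le_biUnion_card_iff_exists_injective
    (fun p : Bool × G => K.image (fun φ => φ p.2))).1 hall
  -- extract piecewise structure
  have hchoice : ∀ b : Bool, ∀ x : G, ∃ φ : Equiv.Perm G, φ ∈ K ∧ φ x = u (b, x) := by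
    intro b x
    obtain ⟨φ, hφ, hφx⟩ := Finset.mem_image.1 (humem (b, x))
    exact ⟨φ, hφ, hφx⟩
  choose c hcK hcu using hchoice
  have hpw : ∀ b : Bool, PW F Set.univ ((fun x => u (b, x)) '' Set.univ) := by
    intro b
    refine ⟨c b, fun x => hKF (hcK b x), ?_, ?_, ?_⟩
    · apply Set.Finite.subset K.finite_toSet
      rintro - ⟨x, rfl⟩
      exact hcK b x
    · intro x₁ _ x₂ _ hv
      have hv' : u (b, x₁) = u (b, x₂) := by
        rw [← hcu b x₁, ← hcu b x₂]
        exact hv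
      exact (Prod.ext_iff.1 (huinj hv')).2
    · apply Set.image_congr
      intro x _
      exact hcu b x
  set C : Set G := (fun x => u (true, x)) '' Set.univ with hC
  set D : Set G := (fun x => u (false, x)) '' Set.univ with hDdef
  have hCD : C ⊆ Dᶜ := by
    rintro - ⟨x₁, -, rfl⟩ ⟨x₂, -, hx⟩
    have := huinj hx.symm
    simp at this
  have hpwDc : PW F Dᶜ Set.univ := pw_symm (pw_compress (hpw true) hCD)
  have hpwD : PW F D Set.univ := pw_symm (hpw false)
  obtain ⟨n, A, φ, hφF, hAne, hAdis, hAU, hφdis, hφU⟩ := pw_to_pieces hpwDc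
  obtain ⟨m, B, ψ, hψF, hBne, hBdis, hBU, hψdis, hψU⟩ := pw_to_pieces hpwD
  refine ⟨n, m, A, B, φ, ψ, hφF, hψF, hAne, hBne, hAdis, hBdis, ?_, ?_, hφdis, hφU, hψdis, hψU⟩
  · intro i j
    apply Set.disjoint_left.2
    intro x hxA hxB
    have h1 : x ∈ Dᶜ := hAU ▸ Set.mem_iUnion.2 ⟨i, hxA⟩
    have h2 : x ∈ D := hBU ▸ Set.mem_iUnion.2 ⟨j, hxB⟩
    exact h1 h2
  · rw [hAU, hBU]
    exact Set.compl_union_self D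

theorem measure_not_paradoxical' {G : Type*} (F : Subgroup (Equiv.Perm G)) (μ : Set G → ℝ)
    (h1 : μ Set.univ = 1)
    (hadd : ∀ A B : Set G, Disjoint A B → μ (A ∪ B) = μ A + μ B)
    (hinv : ∀ φ ∈ (F : Set (Equiv.Perm G)), ∀ A : Set G, μ (φ '' A) = μ A) :
    ¬ Paradoxical (F : Set (Equiv.Perm G)) := by
  rintro ⟨n, m, A, B, φ, ψ, hφ, hψ, -, -, hdA, hdB, hAB, hU, hdφ, hUφ, hdψ, hUψ⟩
  have h0 : μ ∅ = 0 := by have := hadd ∅ ∅ (by simp); simp at this; linarith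
  have hsum : ∀ k (C : Fin k → Set G), Pairwise (Function.onFun Disjoint C) →
      μ (⋃ i, C i) = ∑ i, μ (C i) := by
    intro k
    induction k with
    | zero => intro C _; simp [h0]
    | succ k ih =>
      intro C hC
      have hsplit : (⋃ i, C i) = C 0 ∪ ⋃ i : Fin k, C i.succ := by
        ext x; simp [Fin.exists_fin_succ]
      have hdisj : Disjoint (C 0) (⋃ i : Fin k, C i.succ) := by
        rw [Set.disjoint_iUnion_right]
        exact fun i => hC (Fin.succ_ne_zero i).symm
      rw [hsplit, hadd _ _ hdisj, ih (fun i => C i.succ)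
        (fun i j hij => hC (by simpa using hij)), Fin.sum_univ_succ]
  have hA1 : μ (⋃ i, A i) = 1 := by
    rw [hsum n A hdA]
    have : ∑ i, μ (A i) = ∑ i, μ ((φ i) '' (A i)) :=
      Finset.sum_congr rfl (fun i _ => (hinv _ (hφ i) _).symm)
    rw [this, ← hsum n _ hdφ, hUφ, h1]
  have hB1 : μ (⋃ j, B j) = 1 := by
    rw [hsum m B hdB]
    have : ∑ j, μ (B j) = ∑ j, μ ((ψ j) '' (B j)) :=
      Finset.sum_congr rfl (fun j _ => (hinv _ (hψ j) _).symm)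
    rw [this, ← hsum m _ hdψ, hUψ, h1]
  have hd : Disjoint (⋃ i, A i) (⋃ j, B j) := by
    rw [Set.disjoint_iUnion_right]
    intro j
    rw [Set.disjoint_iUnion_left]
    exact fun i => hAB i j
  have := hadd _ _ hd
  rw [hU, h1, hA1, hB1] at this
  linarith
end
end TarskiAux

/-- Tarski's alternative for `F`-actions: `G` is `F`-amenable (admits an
`F`-invariant finitely additive probability measure on P(G)) iff `G` admits no
`F`-paradoxical decomposition. -/
theorem stmt7 {G : Type*} (F : Subgroup (Equiv.Perm G)) :
    (∃ μ : Set G → ℝ, IsFAProb μ ∧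
        ∀ φ ∈ (F : Set (Equiv.Perm G)), ∀ A : Set G, μ (φ '' A) = μ A) ↔
      ¬ Paradoxical (F : Set (Equiv.Perm G)) := by
  constructor
  · rintro ⟨μ, ⟨h1, _, hadd⟩, hinv⟩
    exact TarskiAux.measure_not_paradoxical' F μ h1 hadd hinv
  · intro hP
    by_cases hD : TarskiAux.Doubling F
    · exact absurd (TarskiAux.doubling_paradoxical F hD) hP
    · exact TarskiAux.measure_of_folner F
        (fun K hK ε hε => TarskiAux.folner_of_not_doubling F hD K hK hε)
end

section
/- Let S be a nonempty set, F ⊆ S^S, φ = (φ₁,…,φₙ) a sequence in F, and 𝓔 = {E₁,…,Eₘ} a finite partition of S. Suppose X ⊆ S is a nonempty finite set with |φᵢ⁻¹(Eⱼ) ∩ X| = |Eⱼ ∩ X| for all i, j. For each configuration C ∈ Con(φ,𝓔) set f_C = |X ∩ x₀(C)| / |X|, where x₀(C) = E_{c₀} ∩ φ₁⁻¹(E_{c₁}) ∩ … ∩ φₙ⁻¹(E_{cₙ}). Then (f_C) is a normalized solution of the configuration equations: f_C ≥ 0, Σ_C f_C = 1, and for all i ∈ {1,…,n}, j ∈ {1,…,m}: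 Σ{f_C : cᵢ(C) = j} = Σ{f_C : c₀(C) = j}. -/
/-- The atom `x₀(C)` of the configuration `C = (c₀, (cᵢ))` for the maps `φ` and
the partition `E`: `x₀(C) = E_{c₀} ∩ ⋂ᵢ φᵢ⁻¹(E_{cᵢ})`. -/
def atom {S : Type*} {n m : ℕ} (φ : Fin n → S → S) (E : Fin m → Set S)
    (C : Fin m × (Fin n → Fin m)) : Set S :=
  E C.1 ∩ ⋂ i, (φ i) ⁻¹' (E (C.2 i))

theorem stmt17 {S : Type*} [Nonempty S] (F : Set (S → S)) (n m : ℕ)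
    (φ : Fin n → S → S) (hφ : ∀ i, φ i ∈ F)
    (E : Fin m → Set S)
    (hdisj : Pairwise (Function.onFun Disjoint E))
    (hcov : (⋃ j, E j) = Set.univ)
    (X : Set S) (hXfin : X.Finite) (hXne : X.Nonempty)
    (hX : ∀ (i : Fin n) (j : Fin m),
      ((φ i) ⁻¹' (E j) ∩ X).ncard = (E j ∩ X).ncard) :
    -- the normalized solution f_C = |X ∩ x₀(C)| / |X|
    (∀ C : Fin m × (Fin n → Fin m),
        0 ≤ ((X ∩ atom φ E C).ncard : ℝ) / (X.ncard : ℝ)) ∧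
    (∑ C : Fin m × (Fin n → Fin m),
        ((X ∩ atom φ E C).ncard : ℝ) / (X.ncard : ℝ)) = 1 ∧
    ∀ (i : Fin n) (j : Fin m),
      (∑ C ∈ Finset.univ.filter (fun C : Fin m × (Fin n → Fin m) => C.2 i = j),
          ((X ∩ atom φ E C).ncard : ℝ) / (X.ncard : ℝ)) =
      ∑ C ∈ Finset.univ.filter (fun C : Fin m × (Fin n → Fin m) => C.1 = j),
          ((X ∩ atom φ E C).ncard : ℝ) / (X.ncard : ℝ) := by
  classical
  have hex : ∀ s : S, ∃ j, s ∈ E j := fun s => Set.mem_iUnion.1 (hcov ▸ Set.mem_univ s)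
  choose cls hcls using hex
  have key : ∀ (s : S) (j : Fin m), s ∈ E j ↔ cls s = j := by
    intro s j
    constructor
    · intro h
      by_contra hne
      exact Set.disjoint_left.1 (hdisj (show j ≠ cls s from fun h' => hne h'.symm)) h (hcls s)
    · rintro rfl; exact hcls s
  set g : S → Fin m × (Fin n → Fin m) := fun s => (cls s, fun i => cls (φ i s)) with hg
  have hatom : ∀ C s, s ∈ atom φ E C ↔ g s = C := by
    intro C s
    simp only [atom, Set.mem_inter_iff, Set.mem_iInter, Set.mem_preimage, key, hg,
      Prod.ext_iff, funext_iff]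
  set T := hXfin.toFinset with hT
  have hTcard : T.card = X.ncard := by
    exact (Set.ncard_eq_toFinset_card X hXfin).symm
  have hcard : ∀ C, (X ∩ atom φ E C).ncard = (T.filter fun s => g s = C).card := by
    intro C
    have : X ∩ atom φ E C = ↑(T.filter fun s => g s = C) := by
      ext s
      simp [hatom, hT, Set.Finite.mem_toFinset, and_comm]
    rw [this, Set.ncard_coe_finset]
  have hXncard : (0:ℝ) < (X.ncard : ℝ) := by
    exact_mod_cast (Set.ncard_pos hXfin).2 hXne
  refine ⟨fun C => by positivity, ?_, ?_⟩
  · rw [← Finset.sum_div]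
    rw [div_eq_one_iff_eq hXncard.ne']
    push_cast [hcard]
    rw [← Nat.cast_sum]
    norm_cast
    rw [← hTcard]
    exact (Finset.card_eq_sum_card_fiberwise (fun x _ => Finset.mem_univ (g x))).symm
  · intro i j
    rw [← Finset.sum_div, ← Finset.sum_div]
    congr 1
    push_cast [hcard]
    rw [← Nat.cast_sum, ← Nat.cast_sum]
    norm_cast
    have h1 : ∑ C ∈ Finset.univ.filter (fun C : Fin m × (Fin n → Fin m) => C.2 i = j),
        (T.filter fun s => g s = C).card = (T.filter fun s => cls (φ i s) = j).card := by
      rw [Finset.card_eq_sum_card_fiberwise (f := g)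
        (t := Finset.univ.filter (fun C : Fin m × (Fin n → Fin m) => C.2 i = j))
        (fun x hx => by
          simp only [Finset.mem_coe, Finset.mem_filter, Finset.mem_univ, true_and] at hx ⊢
          exact hx.2)]
      refine Finset.sum_congr rfl fun C hC => ?_
      simp only [Finset.mem_filter, Finset.mem_univ, true_and] at hC
      congr 1
      rw [Finset.filter_filter]
      refine Finset.filter_congr fun s _ => ?_
      constructor
      · rintro rfl; exact ⟨hC, rfl⟩
      · exact fun h => h.2
    have h2 : ∑ C ∈ Finset.univ.filter (fun C : Fin m × (Fin n → Fin m) => C.1 = j),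
        (T.filter fun s => g s = C).card = (T.filter fun s => cls s = j).card := by
      rw [Finset.card_eq_sum_card_fiberwise (f := g)
        (t := Finset.univ.filter (fun C : Fin m × (Fin n → Fin m) => C.1 = j))
        (fun x hx => by
          simp only [Finset.mem_coe, Finset.mem_filter, Finset.mem_univ, true_and] at hx ⊢
          exact hx.2)]
      refine Finset.sum_congr rfl fun C hC => ?_
      simp only [Finset.mem_filter, Finset.mem_univ, true_and] at hC
      congr 1
      rw [Finset.filter_filter]
      refine Finset.filter_congr fun s _ => ?_
      constructor
      · rintro rfl; exact ⟨hC, rfl⟩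
      · exact fun h => h.2
    rw [h1, h2]
    have e1 : (φ i) ⁻¹' (E j) ∩ X = ↑(T.filter fun s => cls (φ i s) = j) := by
      ext s; simp [key, hT, Set.Finite.mem_toFinset, and_comm]
    have e2 : E j ∩ X = ↑(T.filter fun s => cls s = j) := by
      ext s; simp [key, hT, Set.Finite.mem_toFinset, and_comm]
    have := hX i j
    rw [e1, e2, Set.ncard_coe_finset, Set.ncard_coe_finset] at this
    exact this
end
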